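/- arXiv:1804.05513 — 3 statements merged into one kernel-verified Lean document; each statement's English description precedes it below -/
import Mathlib

section
/- Every vector x ∈ [0,1]ⁿ with ‖x‖₁ an integer is a convex combination of binary vectors y ∈ {0,1}ⁿ each satisfying ‖y‖₁ = ‖x‖₁. -/
open Finset

def Goal (n : ℕ) (x : Fin n → ℝ) : Prop :=
  ∃ (N : ℕ) (α : Fin N → ℝ) (y : Fin N → Fin n → ℝ),
    (∀ j, 0 ≤ α j) ∧ (∑ j, α j = 1) ∧
    (∀ j i, y j i = 0 ∨ y j i = 1) ∧
    (∀ j, ∑ i, y j i = ∑ i, x i) ∧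
    (∀ i, x i = ∑ j, α j * y j i)

lemma goal_binary {n : ℕ} (x : Fin n → ℝ) (hb : ∀ i, x i = 0 ∨ x i = 1) : Goal n x :=
  ⟨1, fun _ => 1, fun _ => x, fun _ => zero_le_one, by simp, fun _ => hb, fun _ => rfl,
    fun i => by simp⟩

lemma goal_combine {n : ℕ} (x a b : Fin n → ℝ) (lam : ℝ) (h0 : 0 ≤ lam) (h1 : lam ≤ 1)
    (hx : ∀ i, x i = lam * a i + (1 - lam) * b i)
    (hsa : ∑ i, a i = ∑ i, x i) (hsb : ∑ i, b i = ∑ i, x i)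
    (Ha : Goal n a) (Hb : Goal n b) : Goal n x := by
  obtain ⟨N1, α1, y1, hα1, hs1, hb1, hsum1, hx1⟩ := Ha
  obtain ⟨N2, α2, y2, hα2, hs2, hb2, hsum2, hx2⟩ := Hb
  refine ⟨N1 + N2, Fin.addCases (fun j => lam * α1 j) (fun j => (1 - lam) * α2 j),
    Fin.addCases y1 y2, ?_, ?_, ?_, ?_, ?_⟩
  · intro j
    refine Fin.addCases (fun j => ?_) (fun j => ?_) j <;>
      simp only [Fin.addCases_left, Fin.addCases_right]
    · exact mul_nonneg h0 (hα1 j)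
    · exact mul_nonneg (by linarith) (hα2 j)
  · rw [Fin.sum_univ_add]
    simp only [Fin.addCases_left, Fin.addCases_right, ← Finset.mul_sum, hs1, hs2]
    ring
  · intro j
    refine Fin.addCases (fun j => ?_) (fun j => ?_) j <;>
      simp only [Fin.addCases_left, Fin.addCases_right]
    · exact hb1 j
    · exact hb2 j
  · intro j
    refine Fin.addCases (fun j => ?_) (fun j => ?_) j <;>
      simp only [Fin.addCases_left, Fin.addCases_right]
    · rw [hsum1 j, hsa]
    · rw [hsum2 j, hsb]
  · intro i
    rw [Fin.sum_univ_add]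
    simp only [Fin.addCases_left, Fin.addCases_right]
    rw [hx i, hx1 i, hx2 i, Finset.mul_sum, Finset.mul_sum]
    simp [mul_assoc]

lemma goal_key (k : ℕ) : ∀ {n : ℕ} (x : Fin n → ℝ),
    (∀ i, x i ∈ Set.Icc (0 : ℝ) 1) → (∃ m : ℕ, ∑ i, x i = m) →
    (univ.filter fun i => ¬(x i = 0 ∨ x i = 1)).card ≤ k → Goal n x := by
  induction k with
  | zero =>
    intro n x hx _ hcard
    refine goal_binary x fun i => ?_
    by_contra h
    have : i ∈ univ.filter fun i => ¬(x i = 0 ∨ x i = 1) := by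
      simp only [Finset.mem_filter, Finset.mem_univ, true_and]; exact h
    have := Finset.card_pos.mpr ⟨i, this⟩
    omega
  | succ k ih =>
    intro n x hx hint hcard
    by_cases hb : ∀ i, x i = 0 ∨ x i = 1
    · exact goal_binary x hb
    push_neg at hb
    obtain ⟨i, hi0, hi1⟩ := hb
    have hxi0 : 0 < x i := lt_of_le_of_ne (hx i).1 (Ne.symm hi0)
    have hxi1 : x i < 1 := lt_of_le_of_ne (hx i).2 hi1
    obtain ⟨m, hm⟩ := hint
    -- find another fractional coordinate
    have hj : ∃ j, j ≠ i ∧ x j ≠ 0 ∧ x j ≠ 1 := by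
      by_contra h
      push_neg at h
      have hsplit : ∑ t, x t = x i + ∑ t ∈ univ.erase i, x t := by
        rw [← Finset.sum_erase_add _ _ (mem_univ i)]; ring
      have herase : ∑ t ∈ univ.erase i, x t =
          ((univ.erase i).filter fun t => x t = 1).card := by
        rw [← Finset.sum_boole]
        refine Finset.sum_congr rfl fun t ht => ?_
        by_cases h0 : x t = 0
        · simp [h0]
        · simp [h t (Finset.ne_of_mem_erase ht) h0]
      set c : ℕ := ((univ.erase i).filter fun t => x t = 1).card
      have : x i = (m : ℝ) - c := by rw [← hm, hsplit, herase]; ring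
      rw [this] at hxi0 hxi1
      have h1 : (c : ℝ) < m := by linarith
      have h2 : (m : ℝ) < c + 1 := by linarith
      have h1' : c < m := by exact_mod_cast h1
      have h2' : m < c + 1 := by exact_mod_cast h2
      omega
    obtain ⟨j, hji, hj0, hj1⟩ := hj
    have hxj0 : 0 < x j := lt_of_le_of_ne (hx j).1 (Ne.symm hj0)
    have hxj1 : x j < 1 := lt_of_le_of_ne (hx j).2 hj1
    set dp : ℝ := min (x i) (1 - x j) with hdp
    set dm : ℝ := min (1 - x i) (x j) with hdm
    have hdp0 : 0 < dp := lt_min hxi0 (by linarith)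
    have hdm0 : 0 < dm := lt_min (by linarith) hxj0
    set a : Fin n → ℝ := fun t => x t + (if t = j then dp else 0) - (if t = i then dp else 0)
      with ha
    set b : Fin n → ℝ := fun t => x t + (if t = i then dm else 0) - (if t = j then dm else 0)
      with hbdef
    have hij : i ≠ j := fun h => hji h.symm
    have hai : a i = x i - dp := by simp [ha, hij]
    have haj : a j = x j + dp := by simp [ha, hji]
    have hbi : b i = x i + dm := by simp [hbdef, hij]
    have hbj : b j = x j - dm := by simp [hbdef, hji]
    have hat : ∀ t, t ≠ i → t ≠ j → a t = x t := by intro t h1 h2; simp [ha, h1, h2]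
    have hbt : ∀ t, t ≠ i → t ≠ j → b t = x t := by intro t h1 h2; simp [hbdef, h1, h2]
    have hsa : ∑ t, a t = ∑ t, x t := by
      simp only [ha]
      rw [Finset.sum_sub_distrib, Finset.sum_add_distrib]
      simp [Finset.sum_ite_eq']
    have hsb : ∑ t, b t = ∑ t, x t := by
      simp only [hbdef]
      rw [Finset.sum_sub_distrib, Finset.sum_add_distrib]
      simp [Finset.sum_ite_eq']
    -- bounds
    have hdpxi : dp ≤ x i := min_le_left _ _
    have hdpxj : dp ≤ 1 - x j := min_le_right _ _
    have hdmxi : dm ≤ 1 - x i := min_le_left _ _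
    have hdmxj : dm ≤ x j := min_le_right _ _
    have hba : ∀ t, a t ∈ Set.Icc (0 : ℝ) 1 := by
      intro t
      by_cases h1 : t = i
      · subst h1; rw [hai]; constructor <;> [linarith; linarith [(hx t).2]]
      by_cases h2 : t = j
      · subst h2; rw [haj]; constructor <;> [linarith [(hx t).1]; linarith]
      · rw [hat t h1 h2]; exact hx t
    have hbb : ∀ t, b t ∈ Set.Icc (0 : ℝ) 1 := by
      intro t
      by_cases h1 : t = i
      · subst h1; rw [hbi]; constructor <;> [linarith [(hx t).1]; linarith]
      by_cases h2 : t = j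
      · subst h2; rw [hbj]; constructor <;> [linarith; linarith [(hx t).2]]
      · rw [hbt t h1 h2]; exact hx t
    -- cardinality decreases
    have hmemx : ∀ i0 ∈ ({i, j} : Finset (Fin n)),
        i0 ∈ univ.filter fun t => ¬(x t = 0 ∨ x t = 1) := by
      intro i0 h
      simp only [Finset.mem_insert, Finset.mem_singleton] at h
      rcases h with rfl | rfl <;> simp [hi0, hi1, hj0, hj1]
    have hcard' : ∀ (c : Fin n → ℝ), (∀ t, t ≠ i → t ≠ j → c t = x t) →
        (∃ i0 ∈ ({i, j} : Finset (Fin n)), c i0 = 0 ∨ c i0 = 1) →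
        (univ.filter fun t => ¬(c t = 0 ∨ c t = 1)).card ≤ k := by
      intro c hc ⟨i0, hi0mem, hi0bin⟩
      have hsub : (univ.filter fun t => ¬(c t = 0 ∨ c t = 1)) ⊆
          (univ.filter fun t => ¬(x t = 0 ∨ x t = 1)).erase i0 := by
        intro t ht
        simp only [Finset.mem_filter, Finset.mem_univ, true_and] at ht
        rw [Finset.mem_erase]
        constructor
        · rintro rfl; exact ht hi0bin
        · by_cases h1 : t = i
          · subst h1; exact hmemx t (by simp)
          by_cases h2 : t = j
          · subst h2; exact hmemx t (by simp)
          · simp only [Finset.mem_filter, Finset.mem_univ, true_and]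
            rw [← hc t h1 h2]; exact ht
      calc (univ.filter fun t => ¬(c t = 0 ∨ c t = 1)).card
          ≤ ((univ.filter fun t => ¬(x t = 0 ∨ x t = 1)).erase i0).card :=
            Finset.card_le_card hsub
        _ = (univ.filter fun t => ¬(x t = 0 ∨ x t = 1)).card - 1 :=
            Finset.card_erase_of_mem (hmemx i0 hi0mem)
        _ ≤ k := by omega
    have hcarda : (univ.filter fun t => ¬(a t = 0 ∨ a t = 1)).card ≤ k := by
      refine hcard' a hat ?_
      rcases min_cases (x i) (1 - x j) with ⟨h, _⟩ | ⟨h, _⟩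
      · exact ⟨i, by simp, Or.inl (by rw [hai, ← hdp] at *; linarith)⟩
      · exact ⟨j, by simp, Or.inr (by rw [haj, ← hdp] at *; linarith)⟩
    have hcardb : (univ.filter fun t => ¬(b t = 0 ∨ b t = 1)).card ≤ k := by
      refine hcard' b hbt ?_
      rcases min_cases (1 - x i) (x j) with ⟨h, _⟩ | ⟨h, _⟩
      · exact ⟨i, by simp, Or.inr (by rw [hbi, ← hdm] at *; linarith)⟩
      · exact ⟨j, by simp, Or.inl (by rw [hbj, ← hdm] at *; linarith)⟩
    have Ha := ih a hba ⟨m, by rw [hsa, hm]⟩ hcarda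
    have Hb := ih b hbb ⟨m, by rw [hsb, hm]⟩ hcardb
    set lam : ℝ := dm / (dp + dm) with hlam
    have hsum0 : 0 < dp + dm := by linarith
    have hl0 : 0 ≤ lam := div_nonneg (le_of_lt hdm0) (le_of_lt hsum0)
    have hl1 : lam ≤ 1 := by
      rw [hlam, div_le_one hsum0]; linarith
    refine goal_combine x a b lam hl0 hl1 ?_ hsa hsb Ha Hb
    intro t
    have hkey : lam * (dp + dm) = dm := by
      rw [hlam]; field_simp
    by_cases h1 : t = i
    · subst h1; rw [hai, hbi]; linear_combination hkey
    by_cases h2 : t = j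
    · subst h2; rw [haj, hbj]; linear_combination -hkey
    · rw [hat t h1 h2, hbt t h1 h2]; ring

theorem stmt3 (n : ℕ) (x : Fin n → ℝ)
    (hx : ∀ i, x i ∈ Set.Icc (0 : ℝ) 1)
    (hint : ∃ m : ℕ, ∑ i, x i = m) :
    ∃ (N : ℕ) (α : Fin N → ℝ) (y : Fin N → Fin n → ℝ),
      (∀ j, 0 ≤ α j) ∧ (∑ j, α j = 1) ∧
      (∀ j i, y j i = 0 ∨ y j i = 1) ∧
      (∀ j, ∑ i, y j i = ∑ i, x i) ∧
      (∀ i, x i = ∑ j, α j * y j i) :=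
  goal_key (univ.filter fun i => ¬(x i = 0 ∨ x i = 1)).card x hx hint le_rfl
end

section
/- Define t: ℕ → ℕ by t(1) = 2^200 and t(i+1) = 2^(t(i)/e(i)) for i ≥ 1, where e(i) = 2^(i+10). Then for every i ≥ 2, t(i) ≥ e(i)·t(i-1); in particular t(i) ≥ 4·t(i-1) and t is strictly increasing. -/
/-- `e(i) = 2^(i+10)`. -/
def efun (i : ℕ) : ℕ := 2 ^ (i + 10)

/-- `t(1) = 2^200` and `t(i+1) = 2^(t(i)/e(i))` for `i ≥ 1`. -/
def tfun : ℕ → ℕ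
  | 0 => 0
  | 1 => 2 ^ 200
  | (i + 2) => 2 ^ (tfun (i + 1) / efun (i + 1))

/-- exponent sequence: `t i = 2 ^ bfun i` for `i ≥ 1`. -/
def bfun : ℕ → ℕ
  | 0 => 0
  | 1 => 200
  | (i + 2) => 2 ^ (bfun (i + 1) - (i + 11))

lemma aux_two_pow : ∀ k, 7 ≤ k → 3 * k ≤ 2 ^ k := by
  intro k hk
  induction k with
  | zero => omega
  | succ n ih =>
    rcases Nat.lt_or_ge n 7 with h | h
    · obtain rfl : n = 6 := by omega
      norm_num
    · have h1 := ih (by omega)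
      have h2 : (3:ℕ) ≤ 2 ^ n := by
        calc (3:ℕ) ≤ 3 * n := by omega
        _ ≤ 2 ^ n := h1
      have : 2 ^ (n+1) = 2 ^ n + 2 ^ n := by ring
      omega

lemma bfun_ge : ∀ i, 1 ≤ i → 2 * i + 100 ≤ bfun i := by
  intro i hi
  induction i with
  | zero => omega
  | succ n ih =>
    rcases Nat.lt_or_ge n 1 with h | h
    · obtain rfl : n = 0 := by omega
      simp [bfun]
    · have hb := ih h
      obtain ⟨m, rfl⟩ : ∃ m, n = m + 1 := ⟨n - 1, by omega⟩
      show 2 * (m + 2) + 100 ≤ 2 ^ (bfun (m + 1) - (m + 11))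
      have h1 : m + 91 ≤ bfun (m + 1) - (m + 11) := by omega
      have h2 : 2 * (m + 2) + 100 ≤ 2 ^ (m + 91) := by
        have hm : m < 2 ^ m := Nat.lt_two_pow_self (n := m)
        have : (2:ℕ) ^ (m + 91) = 2 ^ m * 2 ^ 91 := by ring
        nlinarith [pow_pos (by norm_num : (0:ℕ) < 2) m]
      calc 2 * (m + 2) + 100 ≤ 2 ^ (m + 91) := h2
        _ ≤ 2 ^ (bfun (m + 1) - (m + 11)) :=
          Nat.pow_le_pow_right (by norm_num) h1

lemma tfun_eq : ∀ i, 1 ≤ i → tfun i = 2 ^ bfun i := by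
  intro i hi
  induction i with
  | zero => omega
  | succ n ih =>
    rcases Nat.lt_or_ge n 1 with h | h
    · obtain rfl : n = 0 := by omega
      rfl
    · obtain ⟨m, rfl⟩ : ∃ m, n = m + 1 := ⟨n - 1, by omega⟩
      have hb := bfun_ge (m + 1) (by omega)
      have ht : tfun (m + 1) = 2 ^ bfun (m + 1) := ih (by omega)
      show 2 ^ (tfun (m + 1) / efun (m + 1)) = 2 ^ bfun (m + 2)
      rw [ht]
      have : efun (m + 1) = 2 ^ (m + 11) := rfl
      rw [this, Nat.pow_div (by omega) (by norm_num)]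
      rfl

lemma bfun_key : ∀ m : ℕ, (m + 2) + 10 + bfun (m + 1) ≤ bfun (m + 2) := by
  intro m
  have hb := bfun_ge (m + 1) (by omega)
  show (m + 2) + 10 + bfun (m + 1) ≤ 2 ^ (bfun (m + 1) - (m + 11))
  set k := bfun (m + 1) - (m + 11) with hk
  have hk1 : m + 91 ≤ k := by omega
  have hk2 : bfun (m + 1) = k + (m + 11) := by omega
  have h3 : 3 * k ≤ 2 ^ k := aux_two_pow k (by omega)
  omega

lemma part1 : ∀ i, 2 ≤ i → efun i * tfun (i - 1) ≤ tfun i := by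
  intro i hi
  obtain ⟨m, rfl⟩ : ∃ m, i = m + 2 := ⟨i - 2, by omega⟩
  have h1 : tfun (m + 1) = 2 ^ bfun (m + 1) := tfun_eq _ (by omega)
  have h2 : tfun (m + 2) = 2 ^ bfun (m + 2) := tfun_eq _ (by omega)
  have h3 := bfun_key m
  show efun (m + 2) * tfun (m + 2 - 1) ≤ tfun (m + 2)
  have : (m + 2 - 1) = m + 1 := by omega
  rw [this, h1, h2, efun, ← pow_add]
  exact Nat.pow_le_pow_right (by norm_num) (by omega)

lemma part2 : ∀ i, 2 ≤ i → 4 * tfun (i - 1) ≤ tfun i := by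
  intro i hi
  have h1 := part1 i hi
  have h2 : 4 ≤ efun i := by
    have : (2:ℕ) ^ 2 ≤ 2 ^ (i + 10) := Nat.pow_le_pow_right (by norm_num) (by omega)
    simpa [efun] using this
  calc 4 * tfun (i - 1) ≤ efun i * tfun (i - 1) := Nat.mul_le_mul_right _ h2
    _ ≤ tfun i := h1

lemma tfun_pos : ∀ i, 1 ≤ i → 0 < tfun i := by
  intro i hi
  rw [tfun_eq i hi]
  positivity

lemma tfun_lt_succ : ∀ i, 1 ≤ i → tfun i < tfun (i + 1) := by
  intro i hi
  have h := part2 (i + 1) (by omega)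
  simp only [Nat.add_sub_cancel] at h
  have hp := tfun_pos i hi
  omega

theorem stmt4 :
    (∀ i, 2 ≤ i → efun i * tfun (i - 1) ≤ tfun i) ∧
    (∀ i, 2 ≤ i → 4 * tfun (i - 1) ≤ tfun i) ∧
    (∀ i j, 1 ≤ i → i < j → tfun i < tfun j) := by
  refine ⟨part1, part2, ?_⟩
  intro i j hi hij
  induction j with
  | zero => omega
  | succ n ih =>
    rcases Nat.lt_or_ge i n with h | h
    · have := ih h
      have h2 := tfun_lt_succ n (by omega)
      omega
    · obtain rfl : n = i := by omega
      exact tfun_lt_succ _ hi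
end

section
/- Let G be a bipartite graph on classes (A, B) and let G' be obtained from G by adding or removing at most γ·|A||B| edge slots, where γ ≤ d_G(A,B)·δ²/4. If G is ⟨δ⟩-regular with the stronger conclusion d_G(A',B') ≥ (3/4)d_G(A,B) for all A' ⊆ A, B' ⊆ B with |A'| ≥ δ|A|, |B'| ≥ δ|B|, then G' is ⟨δ⟩-regular. -/
open Finset

private lemma filter_card_aux {α β : Type*} [DecidableEq α] [DecidableEq β]
    (E F : Finset (α × β)) (P : α × β → Prop) [DecidablePred P] :
    (E.filter P).card ≤ (F.filter P).card + (E \ F).card := by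
  have h : E.filter P ⊆ F.filter P ∪ (E \ F) := by
    intro x hx
    simp only [mem_filter, mem_union, mem_sdiff] at *
    by_cases hxF : x ∈ F
    · exact Or.inl ⟨hxF, hx.2⟩
    · exact Or.inr ⟨hx.1, hxF⟩
  exact (card_le_card h).trans (card_union_le _ _)

private lemma bidensity_nonneg {α β : Type*} [DecidableEq α] [DecidableEq β]
    (E : Finset (α × β)) (S : Finset α) (T : Finset β) :
    0 ≤ ((E.filter (fun e => e.1 ∈ S ∧ e.2 ∈ T)).card : ℝ) / ((S.card : ℝ) * T.card) := by
  positivity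

/-- Edge density of the bipartite graph with edge set `E` between `S` and `T`. -/
noncomputable def bidensity {α β : Type*} [DecidableEq α] [DecidableEq β]
    (E : Finset (α × β)) (S : Finset α) (T : Finset β) : ℝ :=
  ((E.filter (fun e => e.1 ∈ S ∧ e.2 ∈ T)).card : ℝ) / ((S.card : ℝ) * T.card)

/-- `⟨δ⟩`-regularity of a bipartite graph with edge set `E` on vertex classes `(A, B)`. -/
def deltaRegular {α β : Type*} [DecidableEq α] [DecidableEq β]
    (δ : ℝ) (A : Finset α) (B : Finset β) (E : Finset (α × β)) : Prop :=
  ∀ A' ⊆ A, ∀ B' ⊆ B, δ * A.card ≤ A'.card → δ * B.card ≤ B'.card →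
    (1/2) * bidensity E A B ≤ bidensity E A' B'

theorem stmt13 {α β : Type*} [DecidableEq α] [DecidableEq β]
    (δ γ : ℝ) (A : Finset α) (B : Finset β)
    (G G' : Finset (α × β)) (hG : G ⊆ A ×ˢ B) (hG' : G' ⊆ A ×ˢ B)
    (hedit : (((G \ G') ∪ (G' \ G)).card : ℝ) ≤ γ * ((A.card : ℝ) * B.card))
    (hγ : γ ≤ bidensity G A B * δ^2 / 4)
    (hstrong : ∀ A' ⊆ A, ∀ B' ⊆ B, δ * A.card ≤ A'.card → δ * B.card ≤ B'.card →
      (3/4) * bidensity G A B ≤ bidensity G A' B') :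
    deltaRegular δ A B G' := by
  intro A' hA' B' hB' hA'c hB'c
  by_cases hA : A = ∅
  · have hG'e : G' = ∅ := by
      rw [← subset_empty]
      simpa [hA] using hG'
    simp [bidensity, hG'e]
  by_cases hB : B = ∅
  · have hG'e : G' = ∅ := by
      rw [← subset_empty]
      simpa [hB] using hG'
    simp [bidensity, hG'e]
  have ha : (0:ℝ) < A.card := by
    exact_mod_cast card_pos.mpr (nonempty_iff_ne_empty.mpr hA)
  have hb : (0:ℝ) < B.card := by
    exact_mod_cast card_pos.mpr (nonempty_iff_ne_empty.mpr hB)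
  have hab : (0:ℝ) < (A.card : ℝ) * B.card := mul_pos ha hb
  have hdnn : 0 ≤ bidensity G A B := bidensity_nonneg G A B
  by_cases hδ : δ ≤ 0
  · -- degenerate: δ ≤ 0 forces density 0, hence γ ≤ 0 and G' = G
    have hemp := hstrong ∅ (empty_subset _) ∅ (empty_subset _)
      (by simpa using mul_nonpos_of_nonpos_of_nonneg hδ ha.le)
      (by simpa using mul_nonpos_of_nonpos_of_nonneg hδ hb.le)
    have hd0 : bidensity G A B = 0 := by
      refine le_antisymm ?_ hdnn
      simp only [bidensity, notMem_empty, false_and, filter_false, card_empty,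
        Nat.cast_zero, zero_div] at hemp ⊢
      linarith
    have hγ0 : γ ≤ 0 := by rw [hd0] at hγ; linarith
    have hcard0 : ((G \ G') ∪ (G' \ G)).card = 0 := by
      have h1 : (((G \ G') ∪ (G' \ G)).card : ℝ) ≤ 0 :=
        hedit.trans (by nlinarith)
      exact_mod_cast le_antisymm (by exact_mod_cast h1) (Nat.zero_le _)
    have hGG : G' = G := by
      have h2 := card_eq_zero.mp hcard0
      rw [union_eq_empty] at h2
      exact le_antisymm (sdiff_eq_empty_iff_subset.mp h2.2)
        (sdiff_eq_empty_iff_subset.mp h2.1)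
    rw [hGG, hd0]
    have := bidensity_nonneg G A' B'
    simp only [bidensity]
    linarith
  push_neg at hδ
  have ha' : (0:ℝ) < A'.card := lt_of_lt_of_le (mul_pos hδ ha) hA'c
  have hb' : (0:ℝ) < B'.card := lt_of_lt_of_le (mul_pos hδ hb) hB'c
  have ha'b' : (0:ℝ) < (A'.card : ℝ) * B'.card := mul_pos ha' hb'
  have haa : (A'.card:ℝ) ≤ A.card := by exact_mod_cast card_le_card hA'
  have hbb : (B'.card:ℝ) ≤ B.card := by exact_mod_cast card_le_card hB'
  have hδ1 : δ ≤ 1 := by nlinarith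
  set m : ℝ := ((G \ G').card : ℝ) with hm_def
  set p : ℝ := ((G' \ G).card : ℝ) with hp_def
  have hmnn : 0 ≤ m := by positivity
  have hpnn : 0 ≤ p := by positivity
  have hmp : m + p ≤ γ * ((A.card : ℝ) * B.card) := by
    have := card_union_of_disjoint (disjoint_sdiff_sdiff : Disjoint (G \ G') (G' \ G))
    rw [this] at hedit
    push_cast at hedit
    linarith
  have hs := hstrong A' hA' B' hB' hA'c hB'c
  simp only [bidensity] at hs hγ ⊢
  set D : ℝ := ((G.filter (fun e => e.1 ∈ A ∧ e.2 ∈ B)).card : ℝ) with hD_def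
  set N : ℝ := ((G'.filter (fun e => e.1 ∈ A ∧ e.2 ∈ B)).card : ℝ) with hN_def
  set x : ℝ := ((G.filter (fun e => e.1 ∈ A' ∧ e.2 ∈ B')).card : ℝ) with hx_def
  set y : ℝ := ((G'.filter (fun e => e.1 ∈ A' ∧ e.2 ∈ B')).card : ℝ) with hy_def
  have hDnn : 0 ≤ D := by rw [hD_def]; positivity
  have hm : x ≤ y + m := by
    have := filter_card_aux G G' (fun e => e.1 ∈ A' ∧ e.2 ∈ B')
    rw [hx_def, hy_def, hm_def]
    exact_mod_cast this
  have hp : N ≤ D + p := by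
    have := filter_card_aux G' G (fun e => e.1 ∈ A ∧ e.2 ∈ B)
    rw [hN_def, hD_def, hp_def]
    exact_mod_cast this
  clear_value m p D N x y
  clear hm_def hp_def hD_def hN_def hx_def hy_def hedit hG hG' hstrong
  rw [← mul_div_assoc, div_le_div_iff₀ hab ha'b'] at hs
  rw [← mul_div_assoc, div_le_div_iff₀ hab ha'b']
  have habne : ((A.card : ℝ) * B.card) ≠ 0 := ne_of_gt hab
  have hγ' : γ * ((A.card : ℝ) * B.card) ≤ D * δ^2 / 4 := by
    calc γ * ((A.card : ℝ) * B.card)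
        ≤ (D / ((A.card:ℝ) * B.card) * δ^2 / 4) * ((A.card : ℝ) * B.card) :=
          mul_le_mul_of_nonneg_right hγ hab.le
      _ = D * δ^2 / 4 := by field_simp
  -- key polynomial inequalities
  have h1 : δ * A.card * (δ * B.card) ≤ (A'.card : ℝ) * B'.card :=
    mul_le_mul hA'c hB'c (mul_pos hδ hb).le ha'.le
  have h2 : (A'.card : ℝ) * B'.card ≤ (A.card : ℝ) * B.card :=
    mul_le_mul haa hbb hb'.le ha.le
  have h3 : (m + p) * ((A.card:ℝ) * B.card) ≤ γ * ((A.card:ℝ) * B.card) * ((A.card:ℝ) * B.card) :=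
    mul_le_mul_of_nonneg_right hmp hab.le
  have h4 : γ * ((A.card:ℝ) * B.card) * ((A.card:ℝ) * B.card) ≤ D * δ^2 / 4 * ((A.card:ℝ) * B.card) :=
    mul_le_mul_of_nonneg_right hγ' hab.le
  have h5 : D * (δ * A.card * (δ * B.card)) ≤ D * ((A'.card : ℝ) * B'.card) :=
    mul_le_mul_of_nonneg_left h1 hDnn
  have h6 : x * ((A.card:ℝ) * B.card) ≤ (y + m) * ((A.card:ℝ) * B.card) :=
    mul_le_mul_of_nonneg_right hm hab.le
  have h7 : N * ((A'.card:ℝ) * B'.card) ≤ (D + p) * ((A'.card:ℝ) * B'.card) :=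
    mul_le_mul_of_nonneg_right hp ha'b'.le
  have h8 : p * ((A'.card:ℝ) * B'.card) ≤ p * ((A.card:ℝ) * B.card) :=
    mul_le_mul_of_nonneg_left h2 hpnn
  have h9 : 0 ≤ p * ((A.card:ℝ) * B.card) := by positivity
  have h10 : 0 ≤ m * ((A.card:ℝ) * B.card) := by positivity
  linarith [hs, h3, h4, h5, h6, h7, h8, h9, h10]
end
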